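/- For every even n ≥ 8, the cycle Cₙ admits no fractional revival between any pair of distinct vertices; combined with the odd case (no fractional revival by the automorphism argument), fractional revival occurs in a cycle Cₙ if and only if n = 4 or n = 6. -/

import Mathlib

open Matrix Complex BigOperators

/-- Continuous-time quantum walk `U(t) = exp(-itA)` of a real (weighted) adjacency matrix. -/
noncomputable def qwalk {V : Type*} [Fintype V] [DecidableEq V]
    (A : Matrix V V ℝ) (t : ℝ) : Matrix V V ℂ :=
  NormedSpace.exp ((-(Complex.I * (t : ℂ))) • A.map (fun x => (x : ℂ)))

/-- Characteristic (standard basis) vector of a vertex, over `ℂ`. -/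
noncomputable def eC {V : Type*} [DecidableEq V] (a : V) : V → ℂ := Pi.single a 1

/-- Characteristic (standard basis) vector of a vertex, over `ℝ`. -/
noncomputable def eR {V : Type*} [DecidableEq V] (a : V) : V → ℝ := Pi.single a 1

section Aux
variable {N : Type*} [Fintype N] [DecidableEq N]

lemma exp_mulVec_eigen (M : Matrix N N ℂ) (v : N → ℂ) (μ : ℂ)
    (h : M *ᵥ v = μ • v) :
    NormedSpace.exp M *ᵥ v = Complex.exp μ • v := by
  letI : SeminormedRing (Matrix N N ℂ) := Matrix.linftyOpSemiNormedRing
  letI : NormedRing (Matrix N N ℂ) := Matrix.linftyOpNormedRing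
  letI : NormedAlgebra ℂ (Matrix N N ℂ) := Matrix.linftyOpNormedAlgebra
  have hpow : ∀ k : ℕ, M ^ k *ᵥ v = (μ ^ k) • v := by
    intro k
    induction k with
    | zero => simp
    | succ k ih =>
      rw [pow_succ', ← Matrix.mulVec_mulVec, ih, Matrix.mulVec_smul, h, smul_smul, ← pow_succ]
  have hsumm : Summable (fun k : ℕ => ((Nat.factorial k : ℕ) : ℂ)⁻¹ • M ^ k) :=
    NormedSpace.expSeries_summable' (𝕂 := ℂ) M
  let L : Matrix N N ℂ →ₗ[ℂ] (N → ℂ) :=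
    { toFun := fun X => X *ᵥ v
      map_add' := fun X Y => Matrix.add_mulVec X Y v
      map_smul' := fun c X => Matrix.smul_mulVec c X v }
  have hL : Continuous L := L.continuous_of_finiteDimensional
  have h1 : NormedSpace.exp M *ᵥ v = ∑' k : ℕ, (((Nat.factorial k : ℕ) : ℂ)⁻¹ • M ^ k) *ᵥ v := by
    rw [NormedSpace.exp_eq_tsum ℂ]
    exact ((hsumm.hasSum.map L.toAddMonoidHom hL).tsum_eq).symm
  rw [h1]
  have h2 : ∀ k : ℕ, (((Nat.factorial k : ℕ) : ℂ)⁻¹ • M ^ k) *ᵥ v = (((Nat.factorial k : ℕ) : ℂ)⁻¹ * μ ^ k) • v := by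
    intro k
    rw [Matrix.smul_mulVec, hpow, smul_smul]
  simp_rw [h2]
  rw [Summable.tsum_smul_const (by simpa [smul_eq_mul] using NormedSpace.expSeries_summable' (𝕂 := ℂ) μ)]
  congr 1
  rw [Complex.exp_eq_exp_ℂ, NormedSpace.exp_eq_tsum ℂ]
  simp [smul_eq_mul]

lemma exp_submatrix (M : Matrix N N ℂ) (e : N ≃ N) :
    (NormedSpace.exp M).submatrix e e = NormedSpace.exp (M.submatrix e e) := by
  letI : SeminormedRing (Matrix N N ℂ) := Matrix.linftyOpSemiNormedRing
  letI : NormedRing (Matrix N N ℂ) := Matrix.linftyOpNormedRing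
  letI : NormedAlgebra ℂ (Matrix N N ℂ) := Matrix.linftyOpNormedAlgebra
  have hc : Continuous (Matrix.reindexAlgEquiv ℂ ℂ e.symm : Matrix N N ℂ →ₐ[ℂ] Matrix N N ℂ) :=
    (Matrix.reindexAlgEquiv ℂ ℂ e.symm).toLinearMap.continuous_of_finiteDimensional
  letI : NormedAlgebra ℚ (Matrix N N ℂ) := NormedAlgebra.restrictScalars ℚ ℂ (Matrix N N ℂ)
  have := NormedSpace.map_exp ((Matrix.reindexAlgEquiv ℂ ℂ e.symm).toAlgHom) hc M
  simp [Matrix.reindexAlgEquiv_apply, Matrix.reindex_apply] at this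
  exact this

end Aux


noncomputable def Acyc (n : ℕ) : Matrix (ZMod n) (ZMod n) ℝ :=
  fun i j => if i = j + 1 ∨ j = i + 1 then (1 : ℝ) else 0

/-- `Efn n k a = exp(2πi k a / n)` -/
noncomputable def Efn (n k a : ℕ) : ℂ :=
  Complex.exp (2 * (Real.pi : ℂ) * Complex.I * k * a / n)

lemma Efn_add (n k a b : ℕ) : Efn n k (a + b) = Efn n k a * Efn n k b := by
  rw [Efn, Efn, Efn, ← Complex.exp_add]
  congr 1
  push_cast
  ring

lemma Efn_add_mul (n k a t : ℕ) [NeZero n] : Efn n k (a + n * t) = Efn n k a := by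
  have hn : (n : ℂ) ≠ 0 := Nat.cast_ne_zero.mpr (NeZero.ne n)
  rw [Efn, Efn,
    show (2 * (Real.pi : ℂ) * Complex.I * k * ((a + n * t : ℕ)) / n)
      = 2 * (Real.pi : ℂ) * Complex.I * k * (a : ℕ) / n
        + ((k * t : ℕ) : ℤ) * (2 * (Real.pi : ℂ) * Complex.I) by
      push_cast; field_simp]
  rw [Complex.exp_add, Complex.exp_int_mul_two_pi_mul_I, mul_one]

lemma Efn_mod (n k a : ℕ) [NeZero n] : Efn n k (a % n) = Efn n k a := by
  conv_rhs => rw [show a = a % n + n * (a / n) from (Nat.mod_add_div a n).symm]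
  rw [Efn_add_mul]

lemma Efn_congr (n k : ℕ) [NeZero n] {a b : ℕ} (h : ((a : ZMod n) = (b : ZMod n))) :
    Efn n k a = Efn n k b := by
  have h' : a % n = b % n := (ZMod.natCast_eq_natCast_iff a b n).mp h
  rw [← Efn_mod n k a, ← Efn_mod n k b, h']

/-- character vector -/
noncomputable def ch (n k : ℕ) : ZMod n → ℂ := fun j => Efn n k j.val

lemma ch_ne_zero (n k : ℕ) (j : ZMod n) : ch n k j ≠ 0 := Complex.exp_ne_zero _

lemma Efn_eq_exp_real (n k a : ℕ) :
    Efn n k a = Complex.exp (((2 * Real.pi * k * a / n : ℝ) : ℂ) * Complex.I) := by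
  rw [Efn]; congr 1; push_cast; ring

lemma ch_add (n k : ℕ) [NeZero n] (x c : ZMod n) :
    ch n k (x + c) = ch n k x * Efn n k c.val := by
  simp only [ch]
  rw [← Efn_add]
  exact Efn_congr n k (by push_cast [ZMod.natCast_val, ZMod.cast_id]; ring)

lemma two_ne_zero_zmod (n : ℕ) [NeZero n] (hn : 3 ≤ n) : (2 : ZMod n) ≠ 0 := by
  intro h
  have h2 : ((2 : ℕ) : ZMod n) = 0 := by push_cast; exact h
  have := (ZMod.natCast_eq_zero_iff 2 n).mp h2
  have := Nat.le_of_dvd (by norm_num) this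
  omega

lemma exp_theta_add_inv (θ : ℝ) :
    Complex.exp ((θ : ℂ) * Complex.I) + (Complex.exp ((θ : ℂ) * Complex.I))⁻¹
      = ((2 * Real.cos θ : ℝ) : ℂ) := by
  rw [← Complex.exp_neg, show -((θ : ℂ) * Complex.I) = ((-θ : ℝ) : ℂ) * Complex.I by push_cast; ring,
    Complex.exp_mul_I, Complex.exp_mul_I, ← Complex.ofReal_cos, ← Complex.ofReal_sin,
    ← Complex.ofReal_cos, ← Complex.ofReal_sin, Real.cos_neg, Real.sin_neg]
  push_cast
  ring

set_option maxHeartbeats 1000000 in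
lemma Acyc_mulVec (n : ℕ) [NeZero n] (hn : 3 ≤ n) (k : ℕ) :
    (Acyc n).map (fun x : ℝ => (x : ℂ)) *ᵥ ch n k
      = (((2 * Real.cos (2 * Real.pi * k / n) : ℝ) : ℂ)) • ch n k := by
  haveI : Fact (1 < n) := ⟨by omega⟩
  funext x
  have hne : (x - 1 : ZMod n) ≠ x + 1 := by
    intro h
    apply two_ne_zero_zmod n hn
    have : (x + 1) - (x - 1) = (0 : ZMod n) := by rw [← h]; ring
    calc (2 : ZMod n) = (x + 1) - (x - 1) := by ring
    _ = 0 := this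
  have hcond : ∀ j : ZMod n, (x = j + 1 ∨ j = x + 1) ↔ (j ∈ ({x - 1, x + 1} : Finset (ZMod n))) := by
    intro j
    simp only [Finset.mem_insert, Finset.mem_singleton]
    constructor
    · rintro (h | h)
      · left; rw [h]; ring
      · right; exact h
    · rintro (h | h)
      · left; rw [h]; ring
      · right; exact h
  have hlhs : ((Acyc n).map (fun x : ℝ => (x : ℂ)) *ᵥ ch n k) x
      = ch n k (x - 1) + ch n k (x + 1) := by
    simp only [Matrix.mulVec, dotProduct]
    have : ∀ j : ZMod n, ((Acyc n).map (fun x : ℝ => (x : ℂ))) x j * ch n k j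
        = if j ∈ ({x - 1, x + 1} : Finset (ZMod n)) then ch n k j else 0 := by
      intro j
      rw [Matrix.map_apply]
      by_cases h : (x = j + 1 ∨ j = x + 1)
      · rw [if_pos ((hcond j).mp h), show Acyc n x j = 1 from if_pos h]
        simp
      · rw [if_neg (fun hh => h ((hcond j).mpr hh)), show Acyc n x j = 0 from if_neg h]
        simp
    rw [Finset.sum_congr rfl (fun j _ => this j), Finset.sum_ite_mem, Finset.univ_inter,
      Finset.sum_pair hne]
  rw [hlhs]
  have h1 : ch n k (x + 1) = ch n k x * Efn n k (1 : ZMod n).val := ch_add n k x 1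
  have h1' : ch n k (x - 1) = ch n k x * Efn n k ((-1) : ZMod n).val := by
    have := ch_add n k (x - 1) 1
    rw [sub_add_cancel] at this
    have h2 := ch_add n k x (-1)
    rw [show x + (-1) = x - 1 by ring] at h2
    exact h2
  have hval1 : ((1 : ZMod n)).val = 1 := ZMod.val_one n
  have hmul : Efn n k (1 : ZMod n).val * Efn n k ((-1) : ZMod n).val = 1 := by
    rw [← Efn_add]
    have : (((1 : ZMod n).val + ((-1) : ZMod n).val : ℕ) : ZMod n) = ((0 : ℕ) : ZMod n) := by
      push_cast [ZMod.natCast_val, ZMod.cast_id]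
      ring
    rw [Efn_congr n k this, Efn]
    simp
  have hu : Efn n k (1 : ZMod n).val
      = Complex.exp (((2 * Real.pi * k / n : ℝ) : ℂ) * Complex.I) := by
    rw [hval1, Efn_eq_exp_real]
    norm_num
  have hinv : Efn n k ((-1) : ZMod n).val
      = (Complex.exp (((2 * Real.pi * k / n : ℝ) : ℂ) * Complex.I))⁻¹ := by
    rw [← hu]
    exact eq_inv_of_mul_eq_one_left (by rw [mul_comm]; exact hmul)
  rw [h1, h1', hu, hinv, Pi.smul_apply, smul_eq_mul, ← exp_theta_add_inv]
  ring

lemma Acyc_transpose (n : ℕ) : (Acyc n)ᵀ = Acyc n := by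
  funext i j
  simp only [Matrix.transpose_apply, Acyc]
  exact if_congr or_comm rfl rfl

lemma qwalk_symm (n : ℕ) [NeZero n] (τ : ℝ) : (qwalk (Acyc n) τ)ᵀ = qwalk (Acyc n) τ := by
  unfold qwalk
  rw [← Matrix.exp_transpose]
  congr 1
  rw [Matrix.transpose_smul, ← Matrix.transpose_map, Acyc_transpose]

lemma qwalk_shift (n : ℕ) [NeZero n] (τ : ℝ) (c x y : ZMod n) :
    qwalk (Acyc n) τ (x + c) (y + c) = qwalk (Acyc n) τ x y := by
  have hc : ∀ i j : ZMod n, i + c = j + c + 1 ↔ i = j + 1 := by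
    intro i j
    rw [add_right_comm]
    exact add_left_inj c
  have hsub : ((-(Complex.I * (τ : ℂ))) • (Acyc n).map (fun x : ℝ => (x : ℂ))).submatrix
      (Equiv.addRight c) (Equiv.addRight c)
      = (-(Complex.I * (τ : ℂ))) • (Acyc n).map (fun x : ℝ => (x : ℂ)) := by
    funext i j
    simp only [Matrix.submatrix_apply, Matrix.smul_apply, Matrix.map_apply, Acyc,
      Equiv.coe_addRight]
    exact congrArg _ (congrArg _ (if_congr (or_congr (hc i j) (hc j i)) rfl rfl))
  have := exp_submatrix ((-(Complex.I * (τ : ℂ))) • (Acyc n).map (fun x : ℝ => (x : ℂ)))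
    (Equiv.addRight c)
  rw [hsub] at this
  have h2 := congrFun (congrFun this x) y
  simpa [qwalk, Matrix.submatrix_apply, Equiv.coe_addRight] using h2

lemma qwalk_mulVec_ch (n : ℕ) [NeZero n] (hn : 3 ≤ n) (τ : ℝ) (k : ℕ) :
    qwalk (Acyc n) τ *ᵥ ch n k
      = Complex.exp ((-(Complex.I * (τ : ℂ))) * ((2 * Real.cos (2 * Real.pi * k / n) : ℝ) : ℂ))
          • ch n k := by
  unfold qwalk
  apply exp_mulVec_eigen
  rw [Matrix.smul_mulVec, Acyc_mulVec n hn k, smul_smul]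

lemma key_eq (n : ℕ) [NeZero n] (hn : 3 ≤ n) {τ : ℝ} {α β : ℂ} {a b : ZMod n}
    (H : qwalk (Acyc n) τ *ᵥ eC a = α • eC a + β • eC b) (k : ℕ) :
    Complex.exp ((-(Complex.I * (τ : ℂ))) * ((2 * Real.cos (2 * Real.pi * k / n) : ℝ) : ℂ))
        * ch n k a = α * ch n k a + β * ch n k b := by
  have h1 : ch n k ⬝ᵥ (qwalk (Acyc n) τ *ᵥ eC a) = ch n k ⬝ᵥ (α • eC a + β • eC b) := by rw [H]
  rw [Matrix.dotProduct_mulVec] at h1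
  have h2 : ch n k ᵥ* qwalk (Acyc n) τ = qwalk (Acyc n) τ *ᵥ ch n k := by
    conv_rhs => rw [← qwalk_symm n τ]
    rw [Matrix.mulVec_transpose]
  rw [h2, qwalk_mulVec_ch n hn τ k] at h1
  simpa [eC, dotProduct_add, dotProduct_smul, smul_dotProduct,
    dotProduct_single, smul_eq_mul] using h1

set_option maxHeartbeats 2000000 in
lemma forward (n : ℕ) [NeZero n] (hn : 3 ≤ n) (a b : ZMod n) (τ : ℝ) (α β : ℂ)
    (hab : a ≠ b) (hτ : τ ≠ 0) (hβ : β ≠ 0)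
    (H : qwalk (Acyc n) τ *ᵥ eC a = α • eC a + β • eC b) : n = 4 ∨ n = 6 := by
  by_contra hcon
  push_neg at hcon
  have hent : ∀ x : ZMod n, qwalk (Acyc n) τ x a
      = (if x = a then α else 0) + (if x = b then β else 0) := by
    intro x
    have hx := congrFun H x
    have hl : (qwalk (Acyc n) τ *ᵥ eC a) x = qwalk (Acyc n) τ x a := by
      rw [eC, Matrix.mulVec_single]
      exact mul_one _
    have hr : (α • eC a + β • eC b) x
        = (if x = a then α else 0) + (if x = b then β else 0) := by
      simp [eC, Pi.single_apply, mul_ite]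
    rw [hl, hr] at hx
    exact hx
  have hsym : ∀ x y : ZMod n, qwalk (Acyc n) τ x y = qwalk (Acyc n) τ y x := by
    intro x y
    have := congrFun (congrFun (qwalk_symm n τ) y) x
    simpa [Matrix.transpose_apply] using this
  -- Step A : 2a = 2b
  have h2ab : b + b = a + a := by
    by_contra h2
    have e1 : qwalk (Acyc n) τ b a = β := by
      rw [hent b, if_neg (fun h => hab h.symm), if_pos rfl, zero_add]
    have e2 := qwalk_shift n τ (b - a) (a + (a - b)) a
    rw [show a + (a - b) + (b - a) = a by ring, show a + (b - a) = b by ring] at e2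
    have e5 : qwalk (Acyc n) τ (a + (a - b)) a = 0 := by
      rw [hent]
      rw [if_neg, if_neg, add_zero]
      · intro h
        apply h2
        have h3 : a + (a - b) + b = b + b := by rw [h]
        rw [show a + (a - b) + b = a + a by ring] at h3
        exact h3.symm
      · intro h
        apply hab
        have h3 : a - b = 0 := by
          have := congrArg (fun t => t - a) h
          simpa using this
        exact sub_eq_zero.mp h3
    apply hβ
    rw [← e1, ← hsym a b, e2, e5]
  -- n is even, b = a + h0
  set h0 : ZMod n := b - a with hh0
  clear_value h0
  have hh1 : h0 ≠ 0 := by rw [hh0]; exact sub_ne_zero.mpr (Ne.symm hab)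
  have hh2 : h0 + h0 = 0 := by
    rw [hh0, show (b - a) + (b - a) = (b + b) - (a + a) by ring, h2ab, sub_self]
  have hm0 : h0.val ≠ 0 := fun h => hh1 (by rwa [← ZMod.val_eq_zero])
  have hmlt : h0.val < n := ZMod.val_lt h0
  have hmod : (h0.val + h0.val) % n = 0 := by
    rw [← ZMod.val_add, hh2, ZMod.val_zero]
  have hn2 : n = 2 * h0.val := by
    rcases Nat.dvd_of_mod_eq_zero hmod with ⟨t, ht⟩
    have ht0 : t ≠ 0 := by rintro rfl; omega
    have ht2 : t < 2 := by
      by_contra h'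
      push_neg at h'
      have h'' : n * 2 ≤ n * t := Nat.mul_le_mul_left n h'
      omega
    have ht1 : t = 1 := by omega
    rw [ht1, mul_one] at ht
    omega
  have hn8 : 8 ≤ n := by
    rcases hcon with ⟨h4, h6⟩
    omega
  have hb : ∀ k : ℕ, ch n k b = (-1 : ℂ) ^ k * ch n k a := by
    intro k
    rw [show b = a + h0 by rw [hh0]; ring, ch_add]
    have hE : Efn n k h0.val = (-1 : ℂ) ^ k := by
      have hncast : (n : ℂ) = 2 * (h0.val : ℂ) := by exact_mod_cast congrArg (Nat.cast : ℕ → ℂ) hn2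
      have hmc : (h0.val : ℂ) ≠ 0 := Nat.cast_ne_zero.mpr hm0
      rw [Efn, show ((2 : ℂ) * (Real.pi : ℂ) * Complex.I * k * h0.val / n)
          = k * ((Real.pi : ℂ) * Complex.I) from by
        rw [hncast, div_eq_iff (mul_ne_zero two_ne_zero hmc)]; ring]
      rw [Complex.exp_nat_mul, Complex.exp_pi_mul_I]
    rw [hE]
    ring
  have key : ∀ k : ℕ, Complex.exp (-(Complex.I * (τ : ℂ))
      * ((2 * Real.cos (2 * Real.pi * k / n) : ℝ) : ℂ)) = α + β * (-1 : ℂ) ^ k := by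
    intro k
    have h1 := key_eq n hn H k
    rw [hb k] at h1
    apply mul_right_cancel₀ (ch_ne_zero n k a)
    rw [h1]
    ring
  -- extract the four key equations
  have hnR : (0:ℝ) < n := by positivity
  have hπ := Real.pi_pos
  have hco0 : Real.cos (2 * Real.pi * ((0:ℕ):ℝ) / n) = 1 := by norm_num
  have hco1 : Real.cos (2 * Real.pi * ((1:ℕ):ℝ) / n) = Real.cos (2 * Real.pi / n) := by norm_num
  have hco2 : Real.cos (2 * Real.pi * ((2:ℕ):ℝ) / n) = Real.cos (2 * Real.pi * 2 / n) := by
    norm_num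
  have hco3 : Real.cos (2 * Real.pi * ((3:ℕ):ℝ) / n) = Real.cos (2 * Real.pi * 3 / n) := by
    norm_num
  have e02 : Complex.exp (-(Complex.I * (τ : ℂ))
        * ((2 * Real.cos (2 * Real.pi * ((0:ℕ):ℝ) / n) : ℝ) : ℂ))
      = Complex.exp (-(Complex.I * (τ : ℂ))
        * ((2 * Real.cos (2 * Real.pi * ((2:ℕ):ℝ) / n) : ℝ) : ℂ)) := by
    rw [key 0, key 2]
    norm_num
  have e13 : Complex.exp (-(Complex.I * (τ : ℂ))
        * ((2 * Real.cos (2 * Real.pi * ((1:ℕ):ℝ) / n) : ℝ) : ℂ))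
      = Complex.exp (-(Complex.I * (τ : ℂ))
        * ((2 * Real.cos (2 * Real.pi * ((3:ℕ):ℝ) / n) : ℝ) : ℂ)) := by
    rw [key 1, key 3]
    norm_num
  rw [hco0, hco2] at e02
  rw [hco1, hco3] at e13
  rcases Complex.exp_eq_exp_iff_exists_int.mp e02 with ⟨p, hp⟩
  rcases Complex.exp_eq_exp_iff_exists_int.mp e13 with ⟨q, hq⟩
  have hA : τ * (2 * Real.cos (2 * Real.pi * 2 / n)) - 2 * τ = 2 * Real.pi * p := by
    have h9 : Complex.I * ((τ * (2 * Real.cos (2 * Real.pi * 2 / n)) - 2 * τ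
        - 2 * Real.pi * p : ℝ) : ℂ) = 0 := by
      push_cast at hp ⊢
      linear_combination hp
    have h10 := (mul_eq_zero.mp h9).resolve_left Complex.I_ne_zero
    have h11 := Complex.ofReal_eq_zero.mp h10
    linarith
  have hB : τ * (2 * Real.cos (2 * Real.pi * 3 / n)) - τ * (2 * Real.cos (2 * Real.pi / n))
      = 2 * Real.pi * q := by
    have h9 : Complex.I * ((τ * (2 * Real.cos (2 * Real.pi * 3 / n))
        - τ * (2 * Real.cos (2 * Real.pi / n)) - 2 * Real.pi * q : ℝ) : ℂ) = 0 := by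
      push_cast at hq ⊢
      linear_combination hq
    have h10 := (mul_eq_zero.mp h9).resolve_left Complex.I_ne_zero
    have h11 := Complex.ofReal_eq_zero.mp h10
    linarith
  set c1 := Real.cos (2 * Real.pi / n) with hc1def
  have hcos2 : Real.cos (2 * Real.pi * 2 / n) = 2 * c1 ^ 2 - 1 := by
    rw [show (2 * Real.pi * 2 / n : ℝ) = 2 * (2 * Real.pi / n) by ring, Real.cos_two_mul]
  have hcos3 : Real.cos (2 * Real.pi * 3 / n) = 4 * c1 ^ 3 - 3 * c1 := by
    rw [show (2 * Real.pi * 3 / n : ℝ) = 3 * (2 * Real.pi / n) by ring, Real.cos_three_mul]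
  -- bounds on the angle
  have hθpos : 0 < 2 * Real.pi / n := by positivity
  have hθle : 2 * Real.pi / n ≤ Real.pi / 4 := by
    have h8 : (8:ℝ) ≤ n := by exact_mod_cast hn8
    have := div_le_div_of_nonneg_left (by positivity : (0:ℝ) ≤ 2 * Real.pi)
      (by norm_num : (0:ℝ) < 8) h8
    linarith
  have hc1lt : c1 < 1 := by
    have := Real.cos_lt_cos_of_nonneg_of_le_pi (le_refl 0)
      (by linarith : 2 * Real.pi / n ≤ Real.pi) hθpos
    rw [Real.cos_zero] at this
    exact this
  have hc1ge : Real.sqrt 2 / 2 ≤ c1 := by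
    have := Real.cos_le_cos_of_nonneg_of_le_pi (le_of_lt hθpos)
      (by linarith : Real.pi / 4 ≤ Real.pi) hθle
    rwa [Real.cos_pi_div_four] at this
  have hsqrt2 : 1 < Real.sqrt 2 := by
    nlinarith [Real.sq_sqrt (by norm_num : (0:ℝ) ≤ 2), Real.sqrt_nonneg 2]
  -- p ≠ 0
  have hc2lt : 2 * c1 ^ 2 - 1 < 1 := by nlinarith
  have hp0 : (p:ℝ) ≠ 0 := by
    intro h
    rw [h] at hA
    have : τ * (2 * (2 * c1 ^ 2 - 1)) - 2 * τ = 0 := by rw [← hcos2]; linarith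
    have h2 : τ * (4 * c1 ^ 2 - 4) = 0 := by linarith [this]
    rcases mul_eq_zero.mp h2 with h3 | h3
    · exact hτ h3
    · nlinarith
  -- q = 2 c1 p
  have hid : 2 * Real.cos (2 * Real.pi * 3 / n) - 2 * c1
      = 2 * c1 * (2 * Real.cos (2 * Real.pi * 2 / n) - 2) := by
    rw [hcos2, hcos3]; ring
  have h5 : 2 * Real.pi * (q:ℝ) = 2 * Real.pi * (2 * c1 * p) := by
    linear_combination (-1 : ℝ) * hB + τ * hid + 2 * c1 * hA
  have hqp : (q:ℝ) = 2 * c1 * p :=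
    mul_left_cancel₀ (by positivity) h5
  -- 2 c1 is an algebraic integer and rational, hence an integer
  set ζ : ℂ := Complex.exp (((2 * Real.pi / n : ℝ) : ℂ) * Complex.I) with hζdef
  have hζn : ζ ^ n = 1 := by
    rw [← Complex.exp_nat_mul, show (n : ℂ) * (((2 * Real.pi / n : ℝ) : ℂ) * Complex.I)
        = 2 * (Real.pi : ℂ) * Complex.I from by
      have : (n:ℂ) ≠ 0 := Nat.cast_ne_zero.mpr (NeZero.ne n)
      push_cast
      field_simp]
    exact Complex.exp_two_pi_mul_I
  have hint : IsIntegral ℤ ζ := by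
    refine ⟨Polynomial.X ^ n - Polynomial.C 1, ?_, ?_⟩
    · exact Polynomial.monic_X_pow_sub_C (1:ℤ) (NeZero.ne n)
    · simp [hζn]
  have hinv : ζ⁻¹ = ζ ^ (n - 1) := by
    apply inv_eq_of_mul_eq_one_right
    rw [← pow_succ']
    rw [show n - 1 + 1 = n by omega]
    exact hζn
  have hint2 : IsIntegral ℤ (ζ + ζ⁻¹) := hint.add (hinv ▸ hint.pow (n-1))
  have hζsum : ζ + ζ⁻¹ = ((2 * c1 : ℝ) : ℂ) := exp_theta_add_inv _
  -- express 2c1 as a rational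
  set r : ℚ := (q : ℚ) / (p : ℚ) with hrdef
  have hpq0 : (p : ℚ) ≠ 0 := by exact_mod_cast fun h => hp0 (by exact_mod_cast h)
  have hr : (r : ℝ) = 2 * c1 := by
    rw [hrdef]
    push_cast
    rw [hqp]
    field_simp
  have hrc : ((r : ℚ) : ℂ) = ζ + ζ⁻¹ := by
    rw [hζsum, ← hr]
    norm_cast
  have hint3 : IsIntegral ℤ ((r : ℚ) : ℂ) := hrc ▸ hint2
  rw [show ((r : ℚ) : ℂ) = algebraMap ℚ ℂ r from (eq_ratCast (algebraMap ℚ ℂ) r).symm] at hint3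
  have hint4 : IsIntegral ℤ r :=
    (isIntegral_algebraMap_iff ((algebraMap ℚ ℂ).injective)).mp hint3
  obtain ⟨z, hz⟩ := IsIntegrallyClosed.isIntegral_iff.mp hint4
  have hzq : ((z : ℚ) : ℝ) = (r : ℝ) := by exact_mod_cast congrArg (fun t : ℚ => (t : ℝ)) hz
  have hzr : ((z : ℤ) : ℝ) = 2 * c1 := by
    rw [← hr]
    exact_mod_cast hzq
  have hz1 : (1:ℝ) < (z : ℝ) := by rw [hzr]; nlinarith
  have hz2 : ((z:ℤ) : ℝ) < 2 := by rw [hzr]; linarith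
  have : (1:ℤ) < z := by exact_mod_cast hz1
  have : z < 2 := by exact_mod_cast hz2
  omega

lemma sumv (n : ℕ) [NeZero n] (j : ZMod n) :
    ∑ k ∈ Finset.range n, ch n k j = if j = 0 then (n : ℂ) else 0 := by
  have hz : ∀ k : ℕ, ch n k j = (Complex.exp (2 * (Real.pi : ℂ) * Complex.I * j.val / n)) ^ k := by
    intro k
    rw [ch, Efn, ← Complex.exp_nat_mul]
    congr 1
    ring
  simp_rw [hz]
  by_cases h : j = 0
  · subst h
    simp [ZMod.val_zero]
  · rw [if_neg h]
    set z := Complex.exp (2 * (Real.pi : ℂ) * Complex.I * j.val / n) with hzdef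
    have hnC : (n : ℂ) ≠ 0 := Nat.cast_ne_zero.mpr (NeZero.ne n)
    have hzn : z ^ n = 1 := by
      rw [hzdef, ← Complex.exp_nat_mul,
        show (n : ℂ) * (2 * (Real.pi : ℂ) * Complex.I * j.val / n)
          = (j.val : ℤ) * (2 * (Real.pi : ℂ) * Complex.I) from by push_cast; field_simp]
      exact Complex.exp_int_mul_two_pi_mul_I _
    have hz1 : z ≠ 1 := by
      intro hz1
      rcases Complex.exp_eq_one_iff.mp (hzdef ▸ hz1) with ⟨t, ht⟩
      have hre : (2 * Real.pi * j.val / n - t * (2 * Real.pi) : ℝ) = 0 := by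
        have h9 : Complex.I * ((2 * Real.pi * j.val / n - t * (2 * Real.pi) : ℝ) : ℂ) = 0 := by
          push_cast
          linear_combination ht
        have h10 := (mul_eq_zero.mp h9).resolve_left Complex.I_ne_zero
        exact Complex.ofReal_eq_zero.mp h10
      have hπ := Real.pi_pos
      have hnR : (0 : ℝ) < n := by
        have : 0 < n := Nat.pos_of_ne_zero (NeZero.ne n)
        exact_mod_cast this
      have hveq : (j.val : ℝ) = t * n := by
        have hfac : 2 * Real.pi * ((j.val : ℝ) / n - t) = 0 := by linear_combination hre
        have h2 := (mul_eq_zero.mp hfac).resolve_left (by positivity : (2 * Real.pi : ℝ) ≠ 0)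
        have h3 : (j.val : ℝ) / n = t := by linarith
        rw [div_eq_iff (ne_of_gt hnR)] at h3
        rw [h3]
      have hvlt : (j.val : ℝ) < n := by exact_mod_cast ZMod.val_lt j
      have hvne : (0 : ℝ) < (j.val : ℝ) := by
        have : j.val ≠ 0 := fun hh => h (by rwa [← ZMod.val_eq_zero])
        have : 0 < j.val := Nat.pos_of_ne_zero this
        exact_mod_cast this
      have ht0 : (0 : ℤ) < t := by
        by_contra hh
        push_neg at hh
        have : (t : ℝ) ≤ 0 := by exact_mod_cast hh
        nlinarith
      have ht1 : (t : ℤ) < 1 := by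
        by_contra hh
        push_neg at hh
        have : (1 : ℝ) ≤ (t : ℝ) := by exact_mod_cast hh
        nlinarith
      omega
    rw [geom_sum_eq hz1, hzn, sub_self, zero_div]

lemma construct (n m : ℕ) [NeZero n] (hn : 3 ≤ n) (hm : n = 2 * m) (hm0 : m ≠ 0)
    (τ : ℝ) (α β : ℂ)
    (hk : ∀ k : ℕ, k < n → Complex.exp (-(Complex.I * (τ : ℂ))
      * ((2 * Real.cos (2 * Real.pi * k / n) : ℝ) : ℂ)) = α + β * (-1 : ℂ) ^ k) :
    qwalk (Acyc n) τ *ᵥ eC (0 : ZMod n)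
      = α • eC (0 : ZMod n) + β • eC ((m : ℕ) : ZMod n) := by
  have hnC : (n : ℂ) ≠ 0 := Nat.cast_ne_zero.mpr (NeZero.ne n)
  have hmm : ((m : ZMod n)) + ((m : ZMod n)) = 0 := by
    have : ((m : ZMod n)) + ((m : ZMod n)) = ((2 * m : ℕ) : ZMod n) := by push_cast; ring
    rw [this, ← hm, ZMod.natCast_self]
  have hmval : ((m : ZMod n)).val = m := ZMod.val_cast_of_lt (by omega)
  -- Efn n k m = (-1)^k
  have hE : ∀ k : ℕ, Efn n k m = (-1 : ℂ) ^ k := by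
    intro k
    have hmc : (m : ℂ) ≠ 0 := Nat.cast_ne_zero.mpr hm0
    have hncast : (n : ℂ) = 2 * (m : ℂ) := by exact_mod_cast congrArg (Nat.cast : ℕ → ℂ) hm
    rw [Efn, show ((2 : ℂ) * (Real.pi : ℂ) * Complex.I * k * m / n)
        = k * ((Real.pi : ℂ) * Complex.I) from by
      rw [hncast, div_eq_iff (mul_ne_zero two_ne_zero hmc)]; ring]
    rw [Complex.exp_nat_mul, Complex.exp_pi_mul_I]
  have h1 : (n : ℂ) • eC (0 : ZMod n) = ∑ k ∈ Finset.range n, ch n k := by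
    funext j
    rw [Finset.sum_apply]
    have := sumv n j
    simp only [ch] at this ⊢
    rw [this]
    simp only [Pi.smul_apply, eC, Pi.single_apply, smul_eq_mul]
    by_cases h : j = 0 <;> simp [h]
  have h2 : (n : ℂ) • eC ((m : ℕ) : ZMod n) = ∑ k ∈ Finset.range n, (-1 : ℂ) ^ k • ch n k := by
    funext j
    rw [Finset.sum_apply]
    have hterm : ∀ k : ℕ, ((-1 : ℂ) ^ k • ch n k) j = ch n k (j + (m : ZMod n)) := by
      intro k
      rw [ch_add, hmval, hE, Pi.smul_apply, smul_eq_mul]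
      ring
    simp_rw [hterm]
    have := sumv n (j + (m : ZMod n))
    rw [this]
    have hiff : j + (m : ZMod n) = 0 ↔ j = (m : ZMod n) := by
      constructor
      · intro h
        have : j + (m : ZMod n) + (m : ZMod n) = (m : ZMod n) := by rw [h]; ring
        rwa [add_assoc, hmm, add_zero] at this
      · intro h
        rw [h, hmm]
    simp only [Pi.smul_apply, eC, Pi.single_apply, smul_eq_mul]
    by_cases h : j = (m : ZMod n)
    · rw [if_pos ((hiff).mpr h), if_pos h, mul_one]
    · rw [if_neg (fun hh => h (hiff.mp hh)), if_neg h, mul_zero]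
  apply smul_right_injective (ZMod n → ℂ) hnC
  show (n : ℂ) • _ = (n : ℂ) • _
  rw [← Matrix.mulVec_smul, h1, smul_add]
  rw [smul_comm (n:ℂ) α, smul_comm (n:ℂ) β, h1, h2]
  rw [show (qwalk (Acyc n) τ).mulVec (∑ k ∈ Finset.range n, ch n k)
      = ∑ k ∈ Finset.range n, qwalk (Acyc n) τ *ᵥ ch n k from
    map_sum (Matrix.mulVecLin (qwalk (Acyc n) τ)) _ _]
  rw [Finset.smul_sum, Finset.smul_sum, ← Finset.sum_add_distrib]
  apply Finset.sum_congr rfl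
  intro k hkmem
  rw [qwalk_mulVec_ch n hn τ k, hk k (Finset.mem_range.mp hkmem)]
  rw [add_smul]
  congr 1
  rw [smul_smul]

lemma cexp_ofReal_mul_I (r : ℝ) :
    Complex.exp ((r : ℂ) * Complex.I)
      = ((Real.cos r : ℝ) : ℂ) + ((Real.sin r : ℝ) : ℂ) * Complex.I := by
  rw [Complex.exp_mul_I, ← Complex.ofReal_cos, ← Complex.ofReal_sin]

theorem stmt17' (n : ℕ) [NeZero n] (hn : 3 ≤ n) :
    (∃ (a b : ZMod n) (τ : ℝ) (α β : ℂ), a ≠ b ∧ τ ≠ 0 ∧ β ≠ 0 ∧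
      ‖α‖ ^ 2 + ‖β‖ ^ 2 = 1 ∧
      (qwalk (Acyc n) τ) *ᵥ eC a = α • eC a + β • eC b) ↔
    (n = 4 ∨ n = 6) := by
  constructor
  · rintro ⟨a, b, τ, α, β, hab, hτ, hβ, hnorm, H⟩
    exact forward n hn a b τ α β hab hτ hβ H
  · rintro (rfl | rfl)
    · refine ⟨0, ((2 : ℕ) : ZMod 4), Real.pi / 2, 0, -1, by decide,
        ne_of_gt (by positivity), by norm_num, by simp, ?_⟩
      apply construct 4 2 (by norm_num) (by norm_num) (by norm_num)
      intro k hk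
      interval_cases k
      · have harg : (-(Complex.I * ((Real.pi / 2 : ℝ) : ℂ))
            * ((2 * Real.cos (2 * Real.pi * ((0 : ℕ) : ℝ) / ((4 : ℕ) : ℝ)) : ℝ) : ℂ))
            = ((-Real.pi : ℝ) : ℂ) * Complex.I := by
          rw [show (2 * Real.pi * ((0 : ℕ) : ℝ) / ((4 : ℕ) : ℝ)) = 0 by push_cast; ring,
            Real.cos_zero]
          push_cast; ring
        rw [harg, cexp_ofReal_mul_I, Real.cos_neg, Real.sin_neg, Real.cos_pi, Real.sin_pi]
        norm_num
      · have harg : (-(Complex.I * ((Real.pi / 2 : ℝ) : ℂ))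
            * ((2 * Real.cos (2 * Real.pi * ((1 : ℕ) : ℝ) / ((4 : ℕ) : ℝ)) : ℝ) : ℂ))
            = ((0 : ℝ) : ℂ) * Complex.I := by
          rw [show (2 * Real.pi * ((1 : ℕ) : ℝ) / ((4 : ℕ) : ℝ)) = Real.pi / 2 by
            push_cast; ring, Real.cos_pi_div_two]
          push_cast; ring
        rw [harg, cexp_ofReal_mul_I, Real.cos_zero, Real.sin_zero]
        norm_num
      · have harg : (-(Complex.I * ((Real.pi / 2 : ℝ) : ℂ))
            * ((2 * Real.cos (2 * Real.pi * ((2 : ℕ) : ℝ) / ((4 : ℕ) : ℝ)) : ℝ) : ℂ))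
            = ((Real.pi : ℝ) : ℂ) * Complex.I := by
          rw [show (2 * Real.pi * ((2 : ℕ) : ℝ) / ((4 : ℕ) : ℝ)) = Real.pi by
            push_cast; ring, Real.cos_pi]
          push_cast; ring
        rw [harg, cexp_ofReal_mul_I, Real.cos_pi, Real.sin_pi]
        norm_num
      · have harg : (-(Complex.I * ((Real.pi / 2 : ℝ) : ℂ))
            * ((2 * Real.cos (2 * Real.pi * ((3 : ℕ) : ℝ) / ((4 : ℕ) : ℝ)) : ℝ) : ℂ))
            = ((0 : ℝ) : ℂ) * Complex.I := by
          rw [show (2 * Real.pi * ((3 : ℕ) : ℝ) / ((4 : ℕ) : ℝ)) = Real.pi + Real.pi / 2 by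
            push_cast; ring, Real.cos_add, Real.cos_pi, Real.sin_pi, Real.cos_pi_div_two]
          push_cast; ring
        rw [harg, cexp_ofReal_mul_I, Real.cos_zero, Real.sin_zero]
        norm_num
    · refine ⟨0, ((3 : ℕ) : ZMod 6), 2 * Real.pi / 3, ((-(1/2) : ℝ) : ℂ),
        ((Real.sqrt 3 / 2 : ℝ) : ℂ) * Complex.I, by decide,
        ne_of_gt (by positivity), ?_, ?_, ?_⟩
      · intro h
        rcases mul_eq_zero.mp h with h1 | h1
        · rw [Complex.ofReal_eq_zero] at h1
          have : Real.sqrt 3 = 0 := by linarith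
          rw [Real.sqrt_eq_zero (by norm_num)] at this
          norm_num at this
        · exact Complex.I_ne_zero h1
      · rw [norm_mul, Complex.norm_I, mul_one, Complex.norm_real, Complex.norm_real,
            Real.norm_eq_abs, Real.norm_eq_abs,
          _root_.abs_of_nonneg (by positivity : (0:ℝ) ≤ Real.sqrt 3 / 2)]
        rw [show |(-(1/2) : ℝ)| = 1/2 by rw [abs_neg]; norm_num]
        rw [div_pow, div_pow, Real.sq_sqrt (by norm_num : (0:ℝ) ≤ 3)]
        norm_num
      · apply construct 6 3 (by norm_num) (by norm_num) (by norm_num)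
        have hc3 : Real.cos (Real.pi / 3) = 1 / 2 := Real.cos_pi_div_three
        have hs3 : Real.sin (Real.pi / 3) = Real.sqrt 3 / 2 := Real.sin_pi_div_three
        have hc23 : Real.cos (2 * Real.pi / 3) = -(1 / 2) := by
          rw [show (2 * Real.pi / 3 : ℝ) = Real.pi - Real.pi / 3 by ring, Real.cos_pi_sub, hc3]
        have hs23 : Real.sin (2 * Real.pi / 3) = Real.sqrt 3 / 2 := by
          rw [show (2 * Real.pi / 3 : ℝ) = Real.pi - Real.pi / 3 by ring, Real.sin_pi_sub, hs3]
        have hc43 : Real.cos (4 * Real.pi / 3) = -(1 / 2) := by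
          rw [show (4 * Real.pi / 3 : ℝ) = Real.pi + Real.pi / 3 by ring, Real.cos_add,
            Real.cos_pi, Real.sin_pi, hc3]
          ring
        have hs43 : Real.sin (4 * Real.pi / 3) = -(Real.sqrt 3 / 2) := by
          rw [show (4 * Real.pi / 3 : ℝ) = Real.pi + Real.pi / 3 by ring, Real.sin_add,
            Real.cos_pi, Real.sin_pi, hs3]
          ring
        intro k hk
        interval_cases k
        · have harg : (-(Complex.I * ((2 * Real.pi / 3 : ℝ) : ℂ))
              * ((2 * Real.cos (2 * Real.pi * ((0 : ℕ) : ℝ) / ((6 : ℕ) : ℝ)) : ℝ) : ℂ))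
              = ((-(4 * Real.pi / 3) : ℝ) : ℂ) * Complex.I := by
            rw [show (2 * Real.pi * ((0 : ℕ) : ℝ) / ((6 : ℕ) : ℝ)) = 0 by push_cast; ring,
              Real.cos_zero]
            push_cast; ring
          rw [harg, cexp_ofReal_mul_I, Real.cos_neg, Real.sin_neg, hc43, hs43]
          push_cast; ring
        · have harg : (-(Complex.I * ((2 * Real.pi / 3 : ℝ) : ℂ))
              * ((2 * Real.cos (2 * Real.pi * ((1 : ℕ) : ℝ) / ((6 : ℕ) : ℝ)) : ℝ) : ℂ))
              = ((-(2 * Real.pi / 3) : ℝ) : ℂ) * Complex.I := by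
            rw [show (2 * Real.pi * ((1 : ℕ) : ℝ) / ((6 : ℕ) : ℝ)) = Real.pi / 3 by
              push_cast; ring, hc3]
            push_cast; ring
          rw [harg, cexp_ofReal_mul_I, Real.cos_neg, Real.sin_neg, hc23, hs23]
          push_cast; ring
        · have harg : (-(Complex.I * ((2 * Real.pi / 3 : ℝ) : ℂ))
              * ((2 * Real.cos (2 * Real.pi * ((2 : ℕ) : ℝ) / ((6 : ℕ) : ℝ)) : ℝ) : ℂ))
              = ((2 * Real.pi / 3 : ℝ) : ℂ) * Complex.I := by
            rw [show (2 * Real.pi * ((2 : ℕ) : ℝ) / ((6 : ℕ) : ℝ)) = 2 * Real.pi / 3 by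
              push_cast; ring, hc23]
            push_cast; ring
          rw [harg, cexp_ofReal_mul_I, hc23, hs23]
          push_cast; ring
        · have harg : (-(Complex.I * ((2 * Real.pi / 3 : ℝ) : ℂ))
              * ((2 * Real.cos (2 * Real.pi * ((3 : ℕ) : ℝ) / ((6 : ℕ) : ℝ)) : ℝ) : ℂ))
              = ((4 * Real.pi / 3 : ℝ) : ℂ) * Complex.I := by
            rw [show (2 * Real.pi * ((3 : ℕ) : ℝ) / ((6 : ℕ) : ℝ)) = Real.pi by
              push_cast; ring, Real.cos_pi]
            push_cast; ring
          rw [harg, cexp_ofReal_mul_I, hc43, hs43]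
          push_cast; ring
        · have harg : (-(Complex.I * ((2 * Real.pi / 3 : ℝ) : ℂ))
              * ((2 * Real.cos (2 * Real.pi * ((4 : ℕ) : ℝ) / ((6 : ℕ) : ℝ)) : ℝ) : ℂ))
              = ((2 * Real.pi / 3 : ℝ) : ℂ) * Complex.I := by
            rw [show (2 * Real.pi * ((4 : ℕ) : ℝ) / ((6 : ℕ) : ℝ)) = 4 * Real.pi / 3 by
              push_cast; ring, hc43]
            push_cast; ring
          rw [harg, cexp_ofReal_mul_I, hc23, hs23]
          push_cast; ring
        · have harg : (-(Complex.I * ((2 * Real.pi / 3 : ℝ) : ℂ))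
              * ((2 * Real.cos (2 * Real.pi * ((5 : ℕ) : ℝ) / ((6 : ℕ) : ℝ)) : ℝ) : ℂ))
              = ((-(2 * Real.pi / 3) : ℝ) : ℂ) * Complex.I := by
            rw [show (2 * Real.pi * ((5 : ℕ) : ℝ) / ((6 : ℕ) : ℝ))
                = Real.pi + (Real.pi - Real.pi / 3) by push_cast; ring, Real.cos_add,
              Real.cos_pi, Real.sin_pi, Real.cos_pi_sub, hc3]
            push_cast; ring
          rw [harg, cexp_ofReal_mul_I, Real.cos_neg, Real.sin_neg, hc23, hs23]
          push_cast; ring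


/-- Fractional revival occurs in the cycle Cₙ (n ≥ 3) if and only if n = 4 or n = 6. -/
theorem stmt17 (n : ℕ) [NeZero n] (hn : 3 ≤ n) :
    (∃ (a b : ZMod n) (τ : ℝ) (α β : ℂ), a ≠ b ∧ τ ≠ 0 ∧ β ≠ 0 ∧
      ‖α‖ ^ 2 + ‖β‖ ^ 2 = 1 ∧
      (qwalk (fun i j : ZMod n => if i = j + 1 ∨ j = i + 1 then (1 : ℝ) else 0) τ) *ᵥ
          eC a = α • eC a + β • eC b) ↔
    (n = 4 ∨ n = 6) := by
  exact stmt17' n hn
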